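/- Validity and Bellman-equation form of the one-dimensional Kushner–Dupuis chain (Example 4): Let α ∈ (0,1) and h > 0, let 𝒰 be a nonempty countable set, and let r, μ, σ² : 𝒰 → ℝ satisfy σ²(u) > 0 and σ²(u) ≥ |μ(u)|·h for every u ∈ 𝒰, with Σ := sup_{u∈𝒰} σ²(u) finite and positive. Define α_h := (1 + (h²/Σ)(1/α − 1))^{−1}, p₊(u) := (μ(u)h + σ²(u))/(2Σ), p₋(u) := (−μ(u)h + σ²(u))/(2Σ), p₀(u) := 1 − p₊(u) − p₋(u), and r̃(u) := α_h h² r(u)/(α Σ). Then: (a) for every u, p₊(u), p₋(u), p₀(u) ∈ [0,1] and p₊(u) + p₋(u) + p₀(u) = 1; (b) α_h ∈ (0,1); (c) for any real numbers V₋, V₀, V₊ such that the set { r(u) + α( μ(u)(V₊ − V₋)/(2h) + σ²(u)(V₊ − 2V₀ + V₋)/(2h²) ) : u ∈ 𝒰 } is bounded above, the central-difference discretized equation (1−α)·V₀ = sup_{u∈𝒰} { r(u) + α( μ(u)(V₊ − V₋)/(2h) + σ²(u)(V₊ − 2V₀ + V₋)/(2h²) ) } holds if and only if V₀ = sup_{u∈𝒰}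 { r̃(u) + α_h( p₊(u)·V₊ + p₋(u)·V₋ + p₀(u)·V₀ ) }. -/

import Mathlib

noncomputable section

lemma ciSup_affine {A : Type} [Nonempty A] (f : A → ℝ)
    (hf : BddAbove (Set.range f)) (c d : ℝ) (hc : 0 < c) :
    (⨆ u, (c * f u + d)) = c * (⨆ u, f u) + d := by
  have hL : IsLUB (Set.range f) (⨆ u, f u) := isLUB_ciSup hf
  have hL2 : IsLUB (Set.range fun u => c * f u + d) (c * (⨆ u, f u) + d) := by
    constructor
    · rintro x ⟨u, rfl⟩
      have h1 : f u ≤ ⨆ u, f u := hL.1 ⟨u, rfl⟩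
      have := mul_le_mul_of_nonneg_left h1 hc.le
      dsimp only
      linarith
    · intro b hb
      have h1 : ∀ u, f u ≤ (b - d) / c := by
        intro u
        have : c * f u + d ≤ b := hb ⟨u, rfl⟩
        rw [le_div_iff₀ hc]; linarith
      have h2 : (⨆ u, f u) ≤ (b - d) / c := hL.2 (by rintro x ⟨u, rfl⟩; exact h1 u)
      have := (le_div_iff₀ hc).mp h2
      linarith
  exact hL2.ciSup_eq

theorem kushner_dupuis_chain_one_dim
    (α h : ℝ) (hα0 : 0 < α) (hα1 : α < 1) (hh : 0 < h)
    (A : Type) [Countable A] [Nonempty A]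
    (r μ σ2 : A → ℝ)
    (hσpos : ∀ u, 0 < σ2 u)
    (hsmalldrift : ∀ u, |μ u| * h ≤ σ2 u)
    (Sb : ℝ) (hSb : IsLUB (Set.range σ2) Sb) (hSbpos : 0 < Sb)
    (αh : ℝ) (hαh : αh = (1 + h ^ 2 / Sb * (1 / α - 1))⁻¹)
    (pp pm p0 : A → ℝ)
    (hpp : ∀ u, pp u = (μ u * h + σ2 u) / (2 * Sb))
    (hpm : ∀ u, pm u = (-(μ u) * h + σ2 u) / (2 * Sb))
    (hp0 : ∀ u, p0 u = 1 - pp u - pm u)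
    (rt : A → ℝ) (hrt : ∀ u, rt u = αh * h ^ 2 * r u / (α * Sb)) :
    (∀ u, pp u ∈ Set.Icc (0 : ℝ) 1 ∧ pm u ∈ Set.Icc (0 : ℝ) 1 ∧
      p0 u ∈ Set.Icc (0 : ℝ) 1 ∧ pp u + pm u + p0 u = 1) ∧
    (0 < αh ∧ αh < 1) ∧
    (∀ Vm V0 Vp : ℝ,
      BddAbove (Set.range fun u : A =>
        r u + α * (μ u * (Vp - Vm) / (2 * h) + σ2 u * (Vp - 2 * V0 + Vm) / (2 * h ^ 2))) →
      ((1 - α) * V0 = ⨆ u : A, (r u + α * (μ u * (Vp - Vm) / (2 * h) +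
          σ2 u * (Vp - 2 * V0 + Vm) / (2 * h ^ 2))) ↔
        V0 = ⨆ u : A, (rt u + αh * (pp u * Vp + pm u * Vm + p0 u * V0)))) := by
  have hσle : ∀ u, σ2 u ≤ Sb := fun u => hSb.1 ⟨u, rfl⟩
  have hμh : ∀ u, -(σ2 u) ≤ μ u * h ∧ μ u * h ≤ σ2 u := by
    intro u
    have h1 : μ u * h ≤ |μ u| * h := by
      have := le_abs_self (μ u); nlinarith
    have h2 : -(|μ u| * h) ≤ μ u * h := by
      have := neg_abs_le (μ u); nlinarith
    exact ⟨by linarith [hsmalldrift u], by linarith [hsmalldrift u]⟩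
  have hSb2 : (0:ℝ) < 2 * Sb := by linarith
  -- probabilities
  have ha : ∀ u, pp u ∈ Set.Icc (0 : ℝ) 1 ∧ pm u ∈ Set.Icc (0 : ℝ) 1 ∧
      p0 u ∈ Set.Icc (0 : ℝ) 1 ∧ pp u + pm u + p0 u = 1 := by
    intro u
    obtain ⟨hm1, hm2⟩ := hμh u
    have hσ := hσpos u
    have hσS := hσle u
    have hppI : pp u ∈ Set.Icc (0:ℝ) 1 := by
      rw [hpp u]
      constructor
      · apply div_nonneg (by linarith) (by linarith)
      · rw [div_le_one hSb2]; linarith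
    have hpmI : pm u ∈ Set.Icc (0:ℝ) 1 := by
      rw [hpm u]
      constructor
      · apply div_nonneg (by nlinarith) (by linarith)
      · rw [div_le_one hSb2]; nlinarith
    have hsum : pp u + pm u = σ2 u / Sb := by
      rw [hpp u, hpm u]; field_simp; ring
    have hp0I : p0 u ∈ Set.Icc (0:ℝ) 1 := by
      rw [hp0 u]
      constructor
      · have : σ2 u / Sb ≤ 1 := by rw [div_le_one hSbpos]; exact hσS
        linarith [hsum]
      · have : 0 ≤ σ2 u / Sb := div_nonneg (le_of_lt hσ) (le_of_lt hSbpos)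
        linarith [hsum]
    exact ⟨hppI, hpmI, hp0I, by rw [hp0 u]; ring⟩
  -- αh bounds
  have hβ : 0 < h ^ 2 / Sb * (1 / α - 1) := by
    apply mul_pos (div_pos (by positivity) hSbpos)
    have : 1 < 1 / α := by rw [lt_div_iff₀ hα0]; linarith
    linarith
  have hden : (0:ℝ) < 1 + h ^ 2 / Sb * (1 / α - 1) := by linarith
  have hαh0 : 0 < αh := by rw [hαh]; positivity
  have hαh1 : αh < 1 := by
    rw [hαh]
    rw [inv_lt_one₀ hden]
    linarith
  refine ⟨ha, ⟨hαh0, hαh1⟩, ?_⟩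
  intro Vm V0 Vp hbdd
  set f : A → ℝ := fun u =>
    r u + α * (μ u * (Vp - Vm) / (2 * h) + σ2 u * (Vp - 2 * V0 + Vm) / (2 * h ^ 2)) with hf
  set c : ℝ := αh * h ^ 2 / (α * Sb) with hc
  have hcpos : 0 < c := by positivity
  have hkey : ∀ u, rt u + αh * (pp u * Vp + pm u * Vm + p0 u * V0) = c * f u + αh * V0 := by
    intro u
    rw [hrt u, hp0 u, hpp u, hpm u, hf, hc]
    field_simp
    ring
  have hsup : (⨆ u : A, (rt u + αh * (pp u * Vp + pm u * Vm + p0 u * V0)))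
      = c * (⨆ u, f u) + αh * V0 := by
    rw [show (fun u : A => rt u + αh * (pp u * Vp + pm u * Vm + p0 u * V0))
        = fun u => c * f u + αh * V0 from funext hkey]
    exact ciSup_affine f hbdd c (αh * V0) hcpos
  have hrel : 1 - αh = c * (1 - α) := by
    have hmul : αh * (1 + h ^ 2 / Sb * (1 / α - 1)) = 1 := by
      rw [hαh, inv_mul_cancel₀ hden.ne']
    have h1 : 1 - αh = αh * (h ^ 2 / Sb * (1 / α - 1)) := by
      linear_combination -hmul
    rw [hc, h1]
    field_simp
  rw [hsup]
  constructor
  · intro hE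
    have h2 : c * (⨆ u, f u) = (1 - αh) * V0 := by
      rw [← hE, hrel]; ring
    linarith
  · intro hE
    have h1 : c * ((1 - α) * V0) = c * (⨆ u, f u) := by
      have h0 : c * (⨆ u, f u) = (1 - αh) * V0 := by linarith
      rw [h0, hrel]; ring
    have := mul_left_cancel₀ (ne_of_gt hcpos) h1
    linarith
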